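/- For all integers m and n, P_{m+n} = P_m*P_{n-5} + P_{m+1}*P_{n-3} + P_{m+2}*P_{n-4}. -/
import Mathlib

lemma pad_zero (f : ℤ → ℤ) (hf : ∀ n : ℤ, f n = f (n - 2) + f (n - 3))
    (h0 : f 0 = 0) (h1 : f 1 = 0) (h2 : f 2 = 0) : ∀ n : ℤ, f n = 0 := by
  have hpos : ∀ k : ℕ, f k = 0 ∧ f (k + 1) = 0 ∧ f (k + 2) = 0 := by
    intro k
    induction k with
    | zero => simpa using ⟨h0, h1, h2⟩
    | succ k ih =>
      obtain ⟨a, b, c⟩ := ih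
      have h3 : f ((k : ℤ) + 3) = f ((k : ℤ) + 1) + f (k : ℤ) := by
        have := hf ((k : ℤ) + 3)
        rw [show (k : ℤ) + 3 - 2 = (k : ℤ) + 1 by ring,
            show (k : ℤ) + 3 - 3 = (k : ℤ) by ring] at this
        exact this
      refine ⟨?_, ?_, ?_⟩ <;> push_cast
      · exact b
      · rw [show (k : ℤ) + 1 + 1 = (k : ℤ) + 2 by ring]; exact c
      · rw [show (k : ℤ) + 1 + 2 = (k : ℤ) + 3 by ring]; omega
  have hneg : ∀ k : ℕ, f (-(k : ℤ)) = 0 ∧ f (-(k : ℤ) + 1) = 0 ∧ f (-(k : ℤ) + 2) = 0 := by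
    intro k
    induction k with
    | zero => simpa using ⟨h0, h1, h2⟩
    | succ k ih =>
      obtain ⟨a, b, c⟩ := ih
      have h3 : f (-(k : ℤ) + 2) = f (-(k : ℤ)) + f (-(k : ℤ) - 1) := by
        have := hf (-(k : ℤ) + 2)
        rw [show -(k : ℤ) + 2 - 2 = -(k : ℤ) by ring,
            show -(k : ℤ) + 2 - 3 = -(k : ℤ) - 1 by ring] at this
        exact this
      refine ⟨?_, ?_, ?_⟩ <;> push_cast
      · rw [show -((k : ℤ) + 1) = -(k : ℤ) - 1 by ring]; omega
      · rw [show -((k : ℤ) + 1) + 1 = -(k : ℤ) by ring]; exact a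
      · rw [show -((k : ℤ) + 1) + 2 = -(k : ℤ) + 1 by ring]; exact b
  intro n
  rcases le_or_gt 0 n with h | h
  · obtain ⟨k, rfl⟩ := Int.eq_ofNat_of_zero_le h
    exact (hpos k).1
  · obtain ⟨k, rfl⟩ : ∃ k : ℕ, n = -(k : ℤ) := ⟨n.natAbs, by omega⟩
    exact (hneg k).1

theorem stmt6 (P : ℤ → ℤ)
    (hP : ∀ n : ℤ, P n = P (n - 2) + P (n - 3))
    (hP0 : P 0 = 1) (hP1 : P 1 = 1) (hP2 : P 2 = 1) :
    ∀ m n : ℤ, P (m + n) = P m * P (n - 5) + P (m + 1) * P (n - 3) + P (m + 2) * P (n - 4) := by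
  intro m n
  set f : ℤ → ℤ := fun k =>
    P (m + (k + 5)) - (P m * P (k + 5 - 5) + P (m + 1) * P (k + 5 - 3) + P (m + 2) * P (k + 5 - 4))
    with hfdef
  have hf : ∀ k : ℤ, f k = f (k - 2) + f (k - 3) := by
    intro k
    have e1 : P (m + (k + 5)) = P (m + (k - 2 + 5)) + P (m + (k - 3 + 5)) := by
      have := hP (m + (k + 5))
      rw [show m + (k + 5) - 2 = m + (k - 2 + 5) by ring,
          show m + (k + 5) - 3 = m + (k - 3 + 5) by ring] at this
      exact this
    have e2 : P (k + 5 - 5) = P (k - 2 + 5 - 5) + P (k - 3 + 5 - 5) := by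
      have := hP (k + 5 - 5)
      rw [show k + 5 - 5 - 2 = k - 2 + 5 - 5 by ring,
          show k + 5 - 5 - 3 = k - 3 + 5 - 5 by ring] at this
      exact this
    have e3 : P (k + 5 - 3) = P (k - 2 + 5 - 3) + P (k - 3 + 5 - 3) := by
      have := hP (k + 5 - 3)
      rw [show k + 5 - 3 - 2 = k - 2 + 5 - 3 by ring,
          show k + 5 - 3 - 3 = k - 3 + 5 - 3 by ring] at this
      exact this
    have e4 : P (k + 5 - 4) = P (k - 2 + 5 - 4) + P (k - 3 + 5 - 4) := by
      have := hP (k + 5 - 4)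
      rw [show k + 5 - 4 - 2 = k - 2 + 5 - 4 by ring,
          show k + 5 - 4 - 3 = k - 3 + 5 - 4 by ring] at this
      exact this
    simp only [hfdef]
    linear_combination e1 - P m * e2 - P (m + 1) * e3 - P (m + 2) * e4
  -- base values
  have p3 : P 3 = 2 := by
    have := hP 3; norm_num at this; omega
  have p4 : P 4 = 2 := by
    have := hP 4; norm_num at this; omega
  have pm5 : P (m + 5) = P (m + 1) + P m + P (m + 2) := by
    have h5 := hP (m + 5)
    have h3 := hP (m + 3)
    rw [show m + 5 - 2 = m + 3 by ring, show m + 5 - 3 = m + 2 by ring] at h5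
    rw [show m + 3 - 2 = m + 1 by ring, show m + 3 - 3 = m by ring] at h3
    omega
  have pm6 : P (m + 6) = P m + 2 * P (m + 1) + P (m + 2) := by
    have h6 := hP (m + 6)
    have h4 := hP (m + 4)
    have h3 := hP (m + 3)
    rw [show m + 6 - 2 = m + 4 by ring, show m + 6 - 3 = m + 3 by ring] at h6
    rw [show m + 4 - 2 = m + 2 by ring, show m + 4 - 3 = m + 1 by ring] at h4
    rw [show m + 3 - 2 = m + 1 by ring, show m + 3 - 3 = m by ring] at h3
    omega
  have pm7 : P (m + 7) = P m + 2 * P (m + 1) + 2 * P (m + 2) := by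
    have h7 := hP (m + 7)
    have h5 := hP (m + 5)
    have h4 := hP (m + 4)
    have h3 := hP (m + 3)
    rw [show m + 7 - 2 = m + 5 by ring, show m + 7 - 3 = m + 4 by ring] at h7
    rw [show m + 5 - 2 = m + 3 by ring, show m + 5 - 3 = m + 2 by ring] at h5
    rw [show m + 4 - 2 = m + 2 by ring, show m + 4 - 3 = m + 1 by ring] at h4
    rw [show m + 3 - 2 = m + 1 by ring, show m + 3 - 3 = m by ring] at h3
    omega
  have h0 : f 0 = 0 := by
    simp only [hfdef]
    norm_num [pm5, hP0, hP1, hP2]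
    ring
  have h1 : f 1 = 0 := by
    simp only [hfdef]
    norm_num [hP1, hP2, p3]
    rw [pm6]; ring
  have h2 : f 2 = 0 := by
    simp only [hfdef]
    norm_num [hP2, p3, p4]
    rw [pm7]; ring
  have := pad_zero f hf h0 h1 h2 (n - 5)
  simp only [hfdef] at this
  rw [show m + (n - 5 + 5) = m + n by ring, show n - 5 + 5 - 5 = n - 5 by ring,
      show n - 5 + 5 - 3 = n - 3 by ring, show n - 5 + 5 - 4 = n - 4 by ring] at this
  omega
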